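/- Let k be a commutative ring, G a commutative group, and H a subgroup of G. The kernel of the k-algebra homomorphism from the group algebra k[G] to the group algebra k[G/H] induced by the quotient homomorphism G → G/H equals the ideal of k[G] generated by the elements (single h 1) − 1 as h ranges over H, i.e., by the differences of the basis elements of elements of H and the identity. -/

import Mathlib

/-- For a commutative ring `k`, a commutative group `G` and a subgroup `H ≤ G`, the kernel of the
induced `k`-algebra map `k[G] → k[G/H]` is the ideal generated by the elements
`single h 1 - 1` for `h ∈ H`. -/
theorem stmt_8 (k : Type*) [CommRing k] (G : Type*) [CommGroup G] (H : Subgroup G) :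
    RingHom.ker (MonoidAlgebra.mapDomainAlgHom k k (QuotientGroup.mk' H)) =
      Ideal.span {x : MonoidAlgebra k G |
        ∃ h ∈ H, x = MonoidAlgebra.single h (1 : k) - 1} := by
  set I : Ideal (MonoidAlgebra k G) := Ideal.span {x : MonoidAlgebra k G |
        ∃ h ∈ H, x = MonoidAlgebra.single h (1 : k) - 1} with hI
  set f := MonoidAlgebra.mapDomainAlgHom k k (QuotientGroup.mk' H) with hf
  have hmk : ∀ h ∈ H, Ideal.Quotient.mk I (MonoidAlgebra.single h (1 : k)) = 1 := by
    intro h hh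
    have : MonoidAlgebra.single h (1 : k) - 1 ∈ I :=
      Ideal.subset_span ⟨h, hh, rfl⟩
    have := (Ideal.Quotient.eq (I := I)).2 this
    simpa using this
  -- the monoid hom into units
  have key : ∀ (g : G),
      IsUnit (Ideal.Quotient.mk I (MonoidAlgebra.single g (1 : k))) := by
    intro g
    refine IsUnit.of_mul_eq_one (Ideal.Quotient.mk I (MonoidAlgebra.single g⁻¹ (1 : k))) ?_
    rw [← map_mul, MonoidAlgebra.single_mul_single, mul_inv_cancel, one_mul]
    exact map_one _
  let φ : G →* (MonoidAlgebra k G ⧸ I)ˣ :=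
    { toFun := fun g => (key g).unit
      map_one' := by
        ext
        simp [MonoidAlgebra.one_def]
        exact map_one (Ideal.Quotient.mk I)
      map_mul' := by
        intro a b
        ext
        simp [← map_mul, MonoidAlgebra.single_mul_single] }
  have hφ : ∀ h ∈ H, φ h = 1 := by
    intro h hh
    ext
    simpa [φ] using hmk h hh
  let ψ : G ⧸ H →* (MonoidAlgebra k G ⧸ I)ˣ := QuotientGroup.lift H φ hφ
  let F : MonoidAlgebra k (G ⧸ H) →ₐ[k] MonoidAlgebra k G ⧸ I :=
    MonoidAlgebra.lift k _ (G ⧸ H) ((Units.coeHom _).comp ψ)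
  have hcomp : ∀ x : MonoidAlgebra k G,
      F (f x) = Ideal.Quotient.mk I x := by
    intro x
    have : F.comp f =
        (Ideal.Quotient.mkₐ k I) := by
      apply MonoidAlgebra.algHom_ext
      intro g
      simp only [AlgHom.coe_comp, Function.comp_apply, hf,
        MonoidAlgebra.mapDomainAlgHom_apply, MonoidAlgebra.mapDomain_single]
      rw [show MonoidAlgebra.lift k _ (G ⧸ H) ((Units.coeHom _).comp ψ)
          (MonoidAlgebra.single (QuotientGroup.mk' H g) (1:k)) = _ from
        MonoidAlgebra.lift_single _ _ _]
      simp [ψ, φ, Ideal.Quotient.mkₐ_eq_mk]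
      exact congrArg Units.val (QuotientGroup.lift_mk (φ := φ) _ _ g)
      exact Subsingleton.elim _ _
    exact DFunLike.congr_fun this x
  ext x
  constructor
  · intro hx
    have hx0 : f x = 0 := hx
    have : Ideal.Quotient.mk I x = 0 := by
      rw [← hcomp, hx0, map_zero]
    exact (Ideal.Quotient.eq_zero_iff_mem).1 this
  · intro hx
    refine Ideal.span_le.2 ?_ hx
    rintro y ⟨h, hh, rfl⟩
    simp only [SetLike.mem_coe, RingHom.mem_ker, map_sub, map_one, hf,
      MonoidAlgebra.mapDomainAlgHom_apply, MonoidAlgebra.mapDomain_single]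
    have : (QuotientGroup.mk' H) h = 1 := by
      simpa [QuotientGroup.eq_one_iff] using hh
    rw [this, sub_eq_zero]
    rfl
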